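/- Let q > 1 be a real number, 0 < δ < 1, r ≥ 2 an integer, and let p = (p_1, p_2, …) be a real sequence with |p_n| < δ^n/q^n for all n ≥ 1. Then the partial derivative ∂_r c_1^{(q)}(p) exists and ∂_r c_1^{(q)}(p) = s_r(q) · ( q(q − 1) c_1^{(q)}(p) − q² p_1 − 1 ) / ( r q (q − 1)(1 + p_r) ). -/

import Mathlib

/-- `s_1(q) = q + 1` and `s_n(q) = ∑_{d ∣ n} μ(n/d) q^d` for `n ≠ 1`.
(For `n = 0` the sum over divisors is empty, so `sFun q 0 = 0`.) -/
noncomputable def sFun (q : ℝ) (n : ℕ) : ℝ :=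
  if n = 1 then q + 1
  else ∑ d ∈ n.divisors, (ArithmeticFunction.moebius (n / d) : ℝ) * q ^ d

/-- `M_n(q) = (1/n) ∑_{d ∣ n} μ(n/d) q^d`; so `M_1(q) = q` and `M_n(q) = s_n(q)/n` for `n ≥ 2`. -/
noncomputable def MFun (q : ℝ) (n : ℕ) : ℝ :=
  (1 / (n : ℝ)) * ∑ d ∈ n.divisors, (ArithmeticFunction.moebius (n / d) : ℝ) * q ^ d

/-- `H_q(p) = ∏_{n ≥ 1} (1 + p_n)^{M_n(q)}`, a product of real powers (`Real.rpow`).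
The `n = 0` factor is `(1 + p 0) ^ (0 : ℝ) = 1`, so the product effectively runs over `n ≥ 1`. -/
noncomputable def Hfun (q : ℝ) (p : ℕ → ℝ) : ℝ :=
  ∏' n : ℕ, (1 + p n) ^ (MFun q n)

/-- `c_1^{(q)}(p) = q·p_1/(q − 1) − (H_q(p) − 1)/(q(q − 1))`. -/
noncomputable def c1Fun (q : ℝ) (p : ℕ → ℝ) : ℝ :=
  q * p 1 / (q - 1) - (Hfun q p - 1) / (q * (q - 1))

/-- Bound on `MFun`: `|M_n(q)| ≤ 2 q^n` for `q ≥ 1`. -/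
lemma MFun_abs_le (q : ℝ) (hq : 1 ≤ q) (n : ℕ) : |MFun q n| ≤ 2 * q ^ n := by
  have hqpow : (0:ℝ) ≤ q ^ n := pow_nonneg (by linarith) n
  rcases Nat.eq_zero_or_pos n with rfl | hn
  · have h0 : MFun q 0 = 0 := by simp [MFun]
    rw [h0, abs_zero, pow_zero, mul_one]; norm_num
  have hcard : n.divisors.card ≤ n := by
    have h : n.divisors ⊆ Finset.Icc 1 n := by
      intro d hd
      rw [Nat.mem_divisors] at hd
      have hd0 : d ≠ 0 := by rintro rfl; exact hd.2 (zero_dvd_iff.mp hd.1)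
      exact Finset.mem_Icc.2 ⟨Nat.one_le_iff_ne_zero.2 hd0, Nat.le_of_dvd hn hd.1⟩
    calc n.divisors.card ≤ (Finset.Icc 1 n).card := Finset.card_le_card h
      _ = n := by simp
  have hterm : ∀ d ∈ n.divisors, |(ArithmeticFunction.moebius (n / d) : ℝ) * q ^ d| ≤ q ^ n := by
    intro d hd
    rw [Nat.mem_divisors] at hd
    have hdle : d ≤ n := Nat.le_of_dvd hn hd.1
    have h1 : |(ArithmeticFunction.moebius (n / d) : ℝ)| ≤ 1 := by
      have := ArithmeticFunction.abs_moebius_le_one (n := n / d)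
      calc |(ArithmeticFunction.moebius (n / d) : ℝ)|
          = ((|ArithmeticFunction.moebius (n / d)| : ℤ) : ℝ) := by push_cast; ring
        _ ≤ 1 := by exact_mod_cast this
    have h2 : |q ^ d| ≤ q ^ n := by
      rw [abs_of_nonneg (pow_nonneg (by linarith) d)]
      exact pow_le_pow_right₀ hq hdle
    calc |(ArithmeticFunction.moebius (n / d) : ℝ) * q ^ d|
        = |(ArithmeticFunction.moebius (n / d) : ℝ)| * |q ^ d| := abs_mul _ _
      _ ≤ 1 * q ^ n := mul_le_mul h1 (h2) (abs_nonneg _) zero_le_one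
      _ = q ^ n := one_mul _
  have hsum : |∑ d ∈ n.divisors, (ArithmeticFunction.moebius (n / d) : ℝ) * q ^ d|
      ≤ (n : ℝ) * q ^ n := by
    calc |∑ d ∈ n.divisors, (ArithmeticFunction.moebius (n / d) : ℝ) * q ^ d|
        ≤ ∑ d ∈ n.divisors, |(ArithmeticFunction.moebius (n / d) : ℝ) * q ^ d| :=
          Finset.abs_sum_le_sum_abs _ _
      _ ≤ ∑ _d ∈ n.divisors, q ^ n := Finset.sum_le_sum hterm
      _ = (n.divisors.card : ℝ) * q ^ n := by rw [Finset.sum_const, nsmul_eq_mul]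
      _ ≤ (n : ℝ) * q ^ n := by
          apply mul_le_mul_of_nonneg_right _ hqpow
          exact_mod_cast hcard
  have hn0 : (0:ℝ) < (n : ℝ) := by exact_mod_cast hn
  rw [MFun, abs_mul, abs_of_nonneg (by positivity : (0:ℝ) ≤ 1 / (n:ℝ))]
  calc 1 / (n:ℝ) * |∑ d ∈ n.divisors, (ArithmeticFunction.moebius (n / d) : ℝ) * q ^ d|
      ≤ 1 / (n:ℝ) * ((n : ℝ) * q ^ n) := by
        apply mul_le_mul_of_nonneg_left hsum (by positivity)
    _ = q ^ n := by field_simp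
    _ ≤ 2 * q ^ n := by linarith

lemma abs_log_one_add_le {x : ℝ} (h : |x| < 1) : |Real.log (1 + x)| ≤ |x| / (1 - |x|) := by
  have h' : |(-x)| < 1 := by rwa [abs_neg]
  have := Real.abs_log_sub_add_sum_range_le h' 0
  simp only [Finset.range_zero, Finset.sum_empty, zero_add, pow_one, abs_neg] at this
  have hx : 1 - -x = 1 + x := by ring
  rwa [hx] at this

/-- For `q > 1`, `0 < δ < 1`, an integer `r ≥ 2` and `|p_n| < δ^n/q^n` for all `n ≥ 1`,
the partial derivative `∂_r c_1^{(q)}(p)` (the derivative at `t = p_r` of `t ↦ c_1^{(q)}`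
of `p` with `r`-th entry replaced by `t`) exists and equals
`s_r(q) · (q(q − 1)·c_1^{(q)}(p) − q²·p_1 − 1) / (r·q·(q − 1)·(1 + p_r))`. -/
theorem deriv_c1_higher_variable (q δ : ℝ) (hq : 1 < q) (hδ0 : 0 < δ) (hδ1 : δ < 1)
    (r : ℕ) (hr : 2 ≤ r)
    (p : ℕ → ℝ) (hp : ∀ n : ℕ, 1 ≤ n → |p n| < δ ^ n / q ^ n) :
    ∃ D : ℝ,
      HasDerivAt (fun t : ℝ => c1Fun q (Function.update p r t)) D (p r) ∧
      D = sFun q r * (q * (q - 1) * c1Fun q p - q ^ 2 * p 1 - 1)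
            / ((r : ℝ) * q * (q - 1) * (1 + p r)) := by
  classical
  have hq0 : (0:ℝ) < q := by linarith
  have hq1 : q - 1 ≠ 0 := by intro h; linarith [sub_eq_zero.mp h]
  have hqq : q * (q - 1) ≠ 0 := by
    apply mul_ne_zero (ne_of_gt hq0) hq1
  have hr1 : r ≠ 1 := by omega
  have hr0 : (r : ℝ) ≠ 0 := by
    exact_mod_cast (by omega : r ≠ 0)
  -- basic bounds on p
  have hplt : ∀ n : ℕ, 1 ≤ n → |p n| < δ := by
    intro n hn
    have h1 : δ ^ n / q ^ n ≤ δ ^ n := by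
      apply div_le_self (pow_nonneg hδ0.le n)
      exact one_le_pow₀ hq.le
    have h2 : δ ^ n ≤ δ := by
      calc δ ^ n ≤ δ ^ 1 := pow_le_pow_of_le_one hδ0.le hδ1.le hn
        _ = δ := pow_one δ
    linarith [hp n hn]
  have hppos : ∀ n : ℕ, 1 ≤ n → 0 < 1 + p n := by
    intro n hn
    have := hplt n hn
    have := abs_lt.mp this
    linarith
  -- the log series
  set g : ℕ → ℝ := fun n => MFun q n * Real.log (1 + p n) with hg
  have hgsum : Summable g := by
    apply Summable.of_norm_bounded (g := fun n => (2 / (1 - δ)) * δ ^ n)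
    · exact (summable_geometric_of_lt_one hδ0.le hδ1).mul_left _
    · intro n
      rcases Nat.eq_zero_or_pos n with rfl | hn
      · have : MFun q 0 = 0 := by simp [MFun]
        simp only [hg, this, zero_mul, norm_zero, pow_zero, mul_one]
        have h1δ : (0:ℝ) < 1 - δ := by linarith
        positivity
      · have hpn := hp n hn
        have hpnδ := hplt n hn
        have hpn1 : |p n| < 1 := lt_trans hpnδ hδ1
        have hlog : |Real.log (1 + p n)| ≤ |p n| / (1 - |p n|) := abs_log_one_add_le hpn1
        have hlog2 : |Real.log (1 + p n)| ≤ (δ ^ n / q ^ n) / (1 - δ) := by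
          refine le_trans hlog (div_le_div₀ (by positivity) hpn.le (by linarith) (by linarith))
        have hM := MFun_abs_le q hq.le n
        have hqn : (0:ℝ) < q ^ n := pow_pos hq0 n
        calc ‖g n‖ = |MFun q n| * |Real.log (1 + p n)| := by
              simp [hg, abs_mul, Real.norm_eq_abs]
          _ ≤ (2 * q ^ n) * ((δ ^ n / q ^ n) / (1 - δ)) := by
              apply mul_le_mul hM hlog2 (abs_nonneg _) (by positivity)
          _ = (2 / (1 - δ)) * δ ^ n := by
              have h1δ : (1:ℝ) - δ ≠ 0 := by linarith
              field_simp
  -- product formula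
  have key : ∀ P : ℕ → ℝ, (∀ n, 1 ≤ n → 0 < 1 + P n) →
      Summable (fun n => MFun q n * Real.log (1 + P n)) →
      Hfun q P = Real.exp (∑' n, MFun q n * Real.log (1 + P n)) := by
    intro P hP hsum
    have hfac : ∀ n : ℕ, (1 + P n) ^ (MFun q n)
        = Real.exp (MFun q n * Real.log (1 + P n)) := by
      intro n
      rcases Nat.eq_zero_or_pos n with rfl | hn
      · have : MFun q 0 = 0 := by simp [MFun]
        simp [this]
      · rw [Real.rpow_def_of_pos (hP n hn), mul_comm]
    rw [Hfun, tprod_congr hfac]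
    exact (hsum.hasSum.rexp).tprod_eq
  -- summability for updated sequences
  have hupd_eq : ∀ t : ℝ, (fun n => MFun q n * Real.log (1 + Function.update p r t n))
      = Function.update g r (MFun q r * Real.log (1 + t)) := by
    intro t
    funext n
    by_cases h : n = r
    · subst h; simp [hg]
    · simp [Function.update_of_ne h, hg]
  have hupd_sum : ∀ t : ℝ, Summable (fun n => MFun q n * Real.log (1 + Function.update p r t n)) := by
    intro t
    rw [hupd_eq t]
    exact hgsum.update r _
  -- the constant part of the sum
  set C0 : ℝ := ∑' n, if n = r then 0 else g n with hC0
  have hEq : ∀ t : ℝ, -1 < t → Hfun q (Function.update p r t)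
      = Real.exp (MFun q r * Real.log (1 + t) + C0) := by
    intro t ht
    have hPpos : ∀ n, 1 ≤ n → 0 < 1 + Function.update p r t n := by
      intro n hn
      by_cases h : n = r
      · subst h; rw [Function.update_self]; linarith
      · rw [Function.update_of_ne h]; exact hppos n hn
    rw [key _ hPpos (hupd_sum t)]
    congr 1
    rw [(hupd_sum t).tsum_eq_add_tsum_ite r, Function.update_self]
    congr 1
    apply tsum_congr
    intro n
    by_cases h : n = r
    · simp [h]
    · simp [h, Function.update_of_ne h, hg]
  have hprpos : 0 < 1 + p r := hppos r (by omega)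
  have hprne : (1 + p r) ≠ 0 := ne_of_gt hprpos
  -- H at p itself
  have hHp : Hfun q p = Real.exp (MFun q r * Real.log (1 + p r) + C0) := by
    have := hEq (p r) (by linarith)
    rwa [Function.update_eq_self] at this
  -- derivative of the explicit function
  have h1 : HasDerivAt (fun t : ℝ => 1 + t) 1 (p r) := by
    simpa using (hasDerivAt_id (p r)).const_add 1
  have h2 : HasDerivAt (fun t : ℝ => Real.log (1 + t)) (1 / (1 + p r)) (p r) := by
    simpa using h1.log hprne
  have h3 : HasDerivAt (fun t : ℝ => MFun q r * Real.log (1 + t) + C0)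
      (MFun q r * (1 / (1 + p r))) (p r) := (h2.const_mul (MFun q r)).add_const C0
  have h4 := h3.exp
  have h5 : HasDerivAt
      (fun t : ℝ => q * p 1 / (q - 1)
        - (Real.exp (MFun q r * Real.log (1 + t) + C0) - 1) / (q * (q - 1)))
      (-(Real.exp (MFun q r * Real.log (1 + p r) + C0) * (MFun q r * (1 / (1 + p r)))
          / (q * (q - 1)))) (p r) :=
    ((h4.sub_const 1).div_const _).const_sub _
  -- transfer
  have hev : (fun t : ℝ => c1Fun q (Function.update p r t)) =ᶠ[nhds (p r)]
      (fun t : ℝ => q * p 1 / (q - 1)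
        - (Real.exp (MFun q r * Real.log (1 + t) + C0) - 1) / (q * (q - 1))) := by
    have hmem : Set.Ioi (-1 : ℝ) ∈ nhds (p r) :=
      Ioi_mem_nhds (by linarith : (-1:ℝ) < p r)
    filter_upwards [hmem] with t ht
    rw [c1Fun, hEq t ht, Function.update_of_ne (by omega : (1:ℕ) ≠ r)]
  refine ⟨_, h5.congr_of_eventuallyEq hev, ?_⟩
  -- final algebra
  rw [← hHp]
  have hs : sFun q r = (r : ℝ) * MFun q r := by
    rw [sFun, if_neg hr1, MFun]
    field_simp
  have hc : q * (q - 1) * c1Fun q p - q ^ 2 * p 1 - 1 = -Hfun q p := by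
    rw [c1Fun]
    field_simp
    ring
  rw [hs, hc]
  field_simp
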